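/- arXiv:1103.2289 — 2 statements merged into one kernel-verified Lean document; each statement's English description precedes it below -/
import Mathlib

section
/- In the setting of the previous invariant with M a commutative monoid, suppose after some sequence of steps exactly one index a has v_a possibly different from e and v_l = e for all l ≠ a. Then v_a = Π_l x_l. -/
/-- If after some sequence of send-and-fuse steps in a commutative monoid all
values except the one at node `a` equal the identity, then node `a` holds the
exact aggregate `∏ l, x l` of all initial values. -/
theorem unique_active_node_holds_aggregate
    (M : Type*) [CommMonoid M]
    (n : ℕ) (x : Fin n → M) (v : ℕ → Fin n → M)
    (h0 : v 0 = x)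
    (hstep : ∀ k : ℕ, ∃ i j : Fin n, i ≠ j ∧
      v (k + 1) j = v k i * v k j ∧
      v (k + 1) i = 1 ∧
      ∀ l : Fin n, l ≠ i → l ≠ j → v (k + 1) l = v k l)
    (k : ℕ) (a : Fin n)
    (hothers : ∀ l : Fin n, l ≠ a → v k l = 1) :
    v k a = ∏ l, x l := by
  have hinv : ∀ m : ℕ, ∏ l, v m l = ∏ l, x l := by
    intro m
    induction m with
    | zero => rw [h0]
    | succ m ih =>
      obtain ⟨i, j, hij, hj, hi, hrest⟩ := hstep m
      rw [← ih]
      rw [← Finset.prod_erase_mul _ _ (Finset.mem_univ j),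
          ← Finset.prod_erase_mul _ _ (Finset.mem_univ j)]
      have hij' : i ∈ (Finset.univ.erase j) := Finset.mem_erase.2 ⟨hij, Finset.mem_univ i⟩
      rw [← Finset.prod_erase_mul _ _ hij', ← Finset.prod_erase_mul _ _ hij']
      have : ∀ l ∈ (Finset.univ.erase j).erase i, v (m+1) l = v m l := by
        intro l hl
        simp only [Finset.mem_erase] at hl
        exact hrest l hl.1 hl.2.1
      rw [Finset.prod_congr rfl this, hi, hj]
      rw [mul_one, mul_assoc]
  have := hinv k
  rw [← this, ← Finset.prod_erase_mul _ _ (Finset.mem_univ a)]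
  rw [Finset.prod_eq_one (fun l hl => hothers l (Finset.mem_erase.1 hl).1), one_mul]
end

section
/- Moreover, in the combined system where nodes carry both value v_l (in a commutative monoid M, initially x_l) and counter c_l (initially 1), updated jointly by send-and-fuse steps, if c_a = n for some node a then v_a = Π_l x_l. -/
/-- Combined system: values in a commutative monoid (initially `x l`) and
counters (initially `1`), jointly updated by send-and-fuse steps. If the
counter at some node `a` reaches `n` at time `k`, then that node's value is the
exact aggregate `∏ l, x l`. -/
theorem count_n_implies_aggregate
    (M : Type*) [CommMonoid M]
    (n : ℕ) (x : Fin n → M) (v : ℕ → Fin n → M) (c : ℕ → Fin n → ℕ)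
    (hv0 : v 0 = x) (hc0 : ∀ l : Fin n, c 0 l = 1)
    (hstep : ∀ k : ℕ, ∃ i j : Fin n, i ≠ j ∧
      v (k + 1) j = v k i * v k j ∧ v (k + 1) i = 1 ∧
      c (k + 1) j = c k i + c k j ∧ c (k + 1) i = 0 ∧
      ∀ l : Fin n, l ≠ i → l ≠ j → v (k + 1) l = v k l ∧ c (k + 1) l = c k l)
    (k : ℕ) (a : Fin n) (ha : c k a = n) :
    v k a = ∏ l, x l := by
  -- Invariants: product of values is constant, sum of counters is n,
  -- and zero counter implies identity value.
  have inv : ∀ m : ℕ, (∏ l, v m l = ∏ l, x l) ∧ (∑ l, c m l = n) ∧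
      (∀ l, c m l = 0 → v m l = 1) := by
    intro m
    induction m with
    | zero =>
      refine ⟨by rw [hv0], by simp [hc0], fun l hl => by simp [hc0 l] at hl⟩
    | succ m ih =>
      obtain ⟨hprod, hsum, hzero⟩ := ih
      obtain ⟨i, j, hij, hvj, hvi, hcj, hci, hrest⟩ := hstep m
      have hsub : ({i, j} : Finset (Fin n)) ⊆ Finset.univ := Finset.subset_univ _
      have key : ∀ (f g : Fin n → M),
          g j = f i * f j → g i = 1 → (∀ l, l ≠ i → l ≠ j → g l = f l) →
          ∏ l, g l = ∏ l, f l := by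
        intro f g hgj hgi hgl
        have h1 : ∏ l ∈ Finset.univ \ {i, j}, g l = ∏ l ∈ Finset.univ \ {i, j}, f l := by
          apply Finset.prod_congr rfl
          intro l hl
          simp only [Finset.mem_sdiff, Finset.mem_insert, Finset.mem_singleton] at hl
          exact hgl l (fun h => hl.2 (Or.inl h)) (fun h => hl.2 (Or.inr h))
        calc ∏ l, g l = (∏ l ∈ Finset.univ \ {i, j}, g l) * ∏ l ∈ ({i, j} : Finset (Fin n)), g l := by
              rw [Finset.prod_sdiff hsub]
          _ = (∏ l ∈ Finset.univ \ {i, j}, f l) * ∏ l ∈ ({i, j} : Finset (Fin n)), f l := by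
              rw [h1, Finset.prod_pair hij, Finset.prod_pair hij, hgi, hgj, one_mul]
          _ = ∏ l, f l := Finset.prod_sdiff hsub
      refine ⟨?_, ?_, ?_⟩
      · rw [← hprod]
        exact key (v m) (v (m+1)) hvj hvi (fun l h1 h2 => (hrest l h1 h2).1)
      · calc ∑ l, c (m+1) l
            = (∑ l ∈ Finset.univ \ {i, j}, c (m+1) l) + ∑ l ∈ ({i, j} : Finset (Fin n)), c (m+1) l := by
              rw [Finset.sum_sdiff hsub]
          _ = (∑ l ∈ Finset.univ \ {i, j}, c m l) + ∑ l ∈ ({i, j} : Finset (Fin n)), c m l := by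
              congr 1
              · apply Finset.sum_congr rfl
                intro l hl
                simp only [Finset.mem_sdiff, Finset.mem_insert, Finset.mem_singleton] at hl
                exact (hrest l (fun h => hl.2 (Or.inl h)) (fun h => hl.2 (Or.inr h))).2
              · rw [Finset.sum_pair hij, Finset.sum_pair hij, hci, hcj]; omega
          _ = ∑ l, c m l := Finset.sum_sdiff hsub
          _ = n := hsum
      · intro l hl
        rcases eq_or_ne l i with rfl | hli
        · exact hvi
        rcases eq_or_ne l j with rfl | hlj
        · rw [hcj] at hl
          rw [hvj, hzero i (by omega), hzero l (by omega), one_mul]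
        · rw [(hrest l hli hlj).2] at hl
          rw [(hrest l hli hlj).1]
          exact hzero l hl
  obtain ⟨hprod, hsum, hzero⟩ := inv k
  have hrest0 : ∀ l, l ≠ a → c k l = 0 := by
    have h1 : c k a + ∑ l ∈ Finset.univ.erase a, c k l = n := by
      rw [Finset.add_sum_erase _ _ (Finset.mem_univ a), hsum]
    have h2 : ∑ l ∈ Finset.univ.erase a, c k l = 0 := by omega
    intro l hl
    exact (Finset.sum_eq_zero_iff.mp h2) l (Finset.mem_erase.mpr ⟨hl, Finset.mem_univ l⟩)
  have : ∏ l, v k l = v k a := Finset.prod_eq_single a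
    (fun l _ hl => hzero l (hrest0 l hl)) (fun h => absurd (Finset.mem_univ a) h)
  rw [← this, hprod]
end
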